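/- Suppose Y_1, Y_2, Y_3 are holomorphic symplectic varieties and L_{12} ⊂ Y_1 × Y_2, L_{23} ⊂ Y_2 × Y_3 are smooth Lagrangian subvarieties. If the projection π_{13} from the scheme-theoretic intersection π_{12}^{-1}(L_{12}) ∩ π_{23}^{-1}(L_{23}) to Y_1 × Y_3 is an isomorphism onto its image, then the intersection π_{12}^{-1}(L_{12}) ∩ π_{23}^{-1}(L_{23}) ⊂ Y_1 × Y_2 × Y_3 is transverse. -/

import Mathlib

/-- A holomorphic symplectic variety, recorded through its points and its (holomorphic)
tangent spaces: at each point `p` the tangent space `T p` is a finite dimensional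
`ℂ`-vector space equipped with a bilinear, alternating, nondegenerate form (the value at
`p` of the holomorphic symplectic form). -/
structure HoloSymplVariety where
  pt : Type
  T : pt → Type
  [acg : ∀ p, AddCommGroup (T p)]
  [mod : ∀ p, Module ℂ (T p)]
  [fd : ∀ p, FiniteDimensional ℂ (T p)]
  form : ∀ p, T p → T p → ℂ
  form_left : ∀ p (c : ℂ) (u v w : T p), form p (c • u + v) w = c * form p u w + form p v w
  form_right : ∀ p (c : ℂ) (u v w : T p), form p u (c • v + w) = c * form p u v + form p u w
  form_alt : ∀ p (v : T p), form p v v = 0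
  form_nondeg : ∀ p (v : T p), (∀ u, form p v u = 0) → v = 0

attribute [instance] HoloSymplVariety.acg HoloSymplVariety.mod HoloSymplVariety.fd

/-- The product symplectic form on `T_p Y₁ × T_q Y₂`. -/
def HoloSymplVariety.prodForm (Y₁ Y₂ : HoloSymplVariety) (p : Y₁.pt) (q : Y₂.pt)
    (x y : Y₁.T p × Y₂.T q) : ℂ :=
  Y₁.form p x.1 y.1 + Y₂.form q x.2 y.2

/-- A subspace of `T_p Y₁ × T_q Y₂` is Lagrangian when the product symplectic form
vanishes on it and it is half-dimensional. -/
def IsLagrangianSubspace (Y₁ Y₂ : HoloSymplVariety) (p : Y₁.pt) (q : Y₂.pt)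
    (L : Submodule ℂ (Y₁.T p × Y₂.T q)) : Prop :=
  (∀ x ∈ L, ∀ y ∈ L, Y₁.prodForm Y₂ p q x y = 0) ∧
    2 * Module.finrank ℂ L = Module.finrank ℂ (Y₁.T p × Y₂.T q)

/-- A smooth Lagrangian subvariety `L ⊂ Y₁ × Y₂`: a set of points together with its
tangent spaces, each of which is a Lagrangian subspace for the product symplectic
structure. -/
structure SmoothLagrangian (Y₁ Y₂ : HoloSymplVariety) where
  L : Set (Y₁.pt × Y₂.pt)
  tangent : ∀ p : Y₁.pt × Y₂.pt, p ∈ L → Submodule ℂ (Y₁.T p.1 × Y₂.T p.2)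
  lagrangian : ∀ p hp, IsLagrangianSubspace Y₁ Y₂ p.1 p.2 (tangent p hp)

section Projections

variable (Y₁ Y₂ Y₃ : HoloSymplVariety) (p₁ : Y₁.pt) (p₂ : Y₂.pt) (p₃ : Y₃.pt)

/-- The differential of the projection `π₁₂ : Y₁ × Y₂ × Y₃ → Y₁ × Y₂`. -/
def dpi12 : (Y₁.T p₁ × Y₂.T p₂ × Y₃.T p₃) →ₗ[ℂ] Y₁.T p₁ × Y₂.T p₂ :=
  LinearMap.prod (LinearMap.fst ℂ _ _) ((LinearMap.fst ℂ _ _).comp (LinearMap.snd ℂ _ _))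

/-- The differential of the projection `π₂₃ : Y₁ × Y₂ × Y₃ → Y₂ × Y₃`. -/
def dpi23 : (Y₁.T p₁ × Y₂.T p₂ × Y₃.T p₃) →ₗ[ℂ] Y₂.T p₂ × Y₃.T p₃ :=
  LinearMap.snd ℂ _ _

/-- The differential of the projection `π₁₃ : Y₁ × Y₂ × Y₃ → Y₁ × Y₃`. -/
def dpi13 : (Y₁.T p₁ × Y₂.T p₂ × Y₃.T p₃) →ₗ[ℂ] Y₁.T p₁ × Y₃.T p₃ :=
  LinearMap.prod (LinearMap.fst ℂ _ _) ((LinearMap.snd ℂ _ _).comp (LinearMap.snd ℂ _ _))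

end Projections

section Helpers

open Module LinearMap Submodule

variable {V W : Type*} [AddCommGroup V] [Module ℂ V] [AddCommGroup W] [Module ℂ W]

/-- rank-nullity for the second projection restricted to a submodule of a product. -/
private lemma fdim_snd [FiniteDimensional ℂ V] [FiniteDimensional ℂ W] (L : Submodule ℂ (V × W)) :
    finrank ℂ (L.map (LinearMap.snd ℂ V W)) + finrank ℂ (L.comap (LinearMap.inl ℂ V W))
      = finrank ℂ L := by
  set f : L →ₗ[ℂ] W := (LinearMap.snd ℂ V W).comp L.subtype with hf
  have hrange : LinearMap.range f = L.map (LinearMap.snd ℂ V W) := by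
    rw [hf, LinearMap.range_comp, Submodule.range_subtype]
  set g : LinearMap.ker f →ₗ[ℂ] V :=
    (LinearMap.fst ℂ V W).comp (L.subtype.comp (LinearMap.ker f).subtype) with hg
  have hmem : ∀ x : LinearMap.ker f, (x : L).val.2 = 0 := fun x => x.2
  have hginj : Function.Injective g := by
    intro x y hxy
    ext
    · exact hxy
    · rw [hmem x, hmem y]
  have hgrange : LinearMap.range g = L.comap (LinearMap.inl ℂ V W) := by
    ext v
    constructor
    · rintro ⟨x, rfl⟩
      have : ((x : L) : V × W) = ((x : L).val.1, 0) := by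
        ext
        · rfl
        · exact hmem x
      simpa [g] using (this ▸ (x : L).2 : _)
    · intro hv
      refine ⟨⟨⟨(v, 0), hv⟩, ?_⟩, rfl⟩
      simp [f]
  have h1 : finrank ℂ (LinearMap.range g) = finrank ℂ (LinearMap.ker f) :=
    (LinearEquiv.ofInjective g hginj).symm.finrank_eq
  have h2 := LinearMap.finrank_range_add_finrank_ker f
  rw [hrange] at h2
  rw [← hgrange, h1]
  exact h2

/-- rank-nullity for the first projection restricted to a submodule of a product. -/
private lemma fdim_fst [FiniteDimensional ℂ V] [FiniteDimensional ℂ W] (L : Submodule ℂ (V × W)) :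
    finrank ℂ (L.map (LinearMap.fst ℂ V W)) + finrank ℂ (L.comap (LinearMap.inr ℂ V W))
      = finrank ℂ L := by
  set f : L →ₗ[ℂ] V := (LinearMap.fst ℂ V W).comp L.subtype with hf
  have hrange : LinearMap.range f = L.map (LinearMap.fst ℂ V W) := by
    rw [hf, LinearMap.range_comp, Submodule.range_subtype]
  set g : LinearMap.ker f →ₗ[ℂ] W :=
    (LinearMap.snd ℂ V W).comp (L.subtype.comp (LinearMap.ker f).subtype) with hg
  have hmem : ∀ x : LinearMap.ker f, (x : L).val.1 = 0 := fun x => x.2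
  have hginj : Function.Injective g := by
    intro x y hxy
    ext
    · rw [hmem x, hmem y]
    · exact hxy
  have hgrange : LinearMap.range g = L.comap (LinearMap.inr ℂ V W) := by
    ext v
    constructor
    · rintro ⟨x, rfl⟩
      have : ((x : L) : V × W) = (0, (x : L).val.2) := by
        ext
        · exact hmem x
        · rfl
      simpa [g] using (this ▸ (x : L).2 : _)
    · intro hv
      refine ⟨⟨⟨(0, v), hv⟩, ?_⟩, rfl⟩
      simp [f]
  have h1 : finrank ℂ (LinearMap.range g) = finrank ℂ (LinearMap.ker f) :=
    (LinearEquiv.ofInjective g hginj).symm.finrank_eq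
  have h2 := LinearMap.finrank_range_add_finrank_ker f
  rw [hrange] at h2
  rw [← hgrange, h1]
  exact h2

/-- For a Lagrangian subspace of a product of symplectic vector spaces, the symplectic
orthogonal of each coordinate projection is the "vertical" part on that coordinate. -/
private lemma lag_orth_common [FiniteDimensional ℂ V] [FiniteDimensional ℂ W]
    (B1 : LinearMap.BilinForm ℂ V) (B2 : LinearMap.BilinForm ℂ W)
    (h1a : B1.IsAlt) (h1n : B1.Nondegenerate) (h2a : B2.IsAlt) (h2n : B2.Nondegenerate)
    (L : Submodule ℂ (V × W))
    (hiso : ∀ x ∈ L, ∀ y ∈ L, B1 x.1 y.1 + B2 x.2 y.2 = 0)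
    (hdim : 2 * finrank ℂ L = finrank ℂ V + finrank ℂ W) :
    B2.orthogonal (L.map (LinearMap.snd ℂ V W)) = L.comap (LinearMap.inr ℂ V W) ∧
    B1.orthogonal (L.map (LinearMap.fst ℂ V W)) = L.comap (LinearMap.inl ℂ V W) := by
  have hA : L.comap (LinearMap.inr ℂ V W) ≤ B2.orthogonal (L.map (LinearMap.snd ℂ V W)) := by
    intro v hv n hn
    obtain ⟨a, haL, rfl⟩ := hn
    have := hiso a haL (0, v) hv
    simpa using this
  have hB : L.comap (LinearMap.inl ℂ V W) ≤ B1.orthogonal (L.map (LinearMap.fst ℂ V W)) := by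
    intro u hu n hn
    obtain ⟨a, haL, rfl⟩ := hn
    have := hiso a haL (u, 0) hu
    simpa using this
  have e1 := fdim_snd L
  have e2 := fdim_fst L
  have o1 := LinearMap.BilinForm.finrank_orthogonal h2n
    (L.map (LinearMap.snd ℂ V W))
  have o2 := LinearMap.BilinForm.finrank_orthogonal h1n
    (L.map (LinearMap.fst ℂ V W))
  have i1 : finrank ℂ (L.comap (LinearMap.inr ℂ V W))
      ≤ finrank ℂ (B2.orthogonal (L.map (LinearMap.snd ℂ V W))) := Submodule.finrank_mono hA
  have i2 : finrank ℂ (L.comap (LinearMap.inl ℂ V W))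
      ≤ finrank ℂ (B1.orthogonal (L.map (LinearMap.fst ℂ V W))) := Submodule.finrank_mono hB
  have b1 : finrank ℂ (L.map (LinearMap.snd ℂ V W)) ≤ finrank ℂ W := Submodule.finrank_le _
  have b2 : finrank ℂ (L.map (LinearMap.fst ℂ V W)) ≤ finrank ℂ V := Submodule.finrank_le _
  exact ⟨(Submodule.eq_of_le_of_finrank_le hA (by omega)).symm,
    (Submodule.eq_of_le_of_finrank_le hB (by omega)).symm⟩

end Helpers

section SymplFormBundled

open Module

private lemma HoloSymplVariety.form_zero_left (Y : HoloSymplVariety) (p : Y.pt) (w : Y.T p) :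
    Y.form p 0 w = 0 := by
  have h := Y.form_left p 1 0 0 w
  simp only [one_smul, add_zero, one_mul] at h
  exact right_eq_add.mp h

private lemma HoloSymplVariety.form_zero_right (Y : HoloSymplVariety) (p : Y.pt) (u : Y.T p) :
    Y.form p u 0 = 0 := by
  have h := Y.form_right p 1 u 0 0
  simp only [one_smul, add_zero, one_mul] at h
  exact right_eq_add.mp h

/-- The symplectic form at a point, bundled as a bilinear form. -/
private def symplForm (Y : HoloSymplVariety) (p : Y.pt) : LinearMap.BilinForm ℂ (Y.T p) :=
  LinearMap.mk₂ ℂ (Y.form p)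
    (fun u v w => by simpa using Y.form_left p 1 u v w)
    (fun c u w => by simpa [Y.form_zero_left] using Y.form_left p c u 0 w)
    (fun u v w => by simpa using Y.form_right p 1 u v w)
    (fun c u v => by simpa [Y.form_zero_right] using Y.form_right p c u v 0)

@[simp] private lemma symplForm_apply (Y : HoloSymplVariety) (p : Y.pt) (u v : Y.T p) :
    symplForm Y p u v = Y.form p u v := rfl

private lemma symplForm_isAlt (Y : HoloSymplVariety) (p : Y.pt) : (symplForm Y p).IsAlt :=
  fun v => Y.form_alt p v

private lemma symplForm_nondeg (Y : HoloSymplVariety) (p : Y.pt) :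
    (symplForm Y p).Nondegenerate := ⟨fun v hv => Y.form_nondeg p v hv,
      fun v hv => Y.form_nondeg p v (fun u => (symplForm_isAlt Y p).isRefl u v (hv u))⟩

end SymplFormBundled

section ComapRank

open Module Submodule

private lemma finrank_comap_dpi12 (Y₁ Y₂ Y₃ : HoloSymplVariety)
    (p₁ : Y₁.pt) (p₂ : Y₂.pt) (p₃ : Y₃.pt) (Λ : Submodule ℂ (Y₁.T p₁ × Y₂.T p₂)) :
    finrank ℂ (Λ.comap (dpi12 Y₁ Y₂ Y₃ p₁ p₂ p₃)) = finrank ℂ Λ + finrank ℂ (Y₃.T p₃) := by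
  set s : (↥Λ × Y₃.T p₃) →ₗ[ℂ] (Y₁.T p₁ × Y₂.T p₂) :=
    Λ.subtype.comp (LinearMap.fst ℂ _ _) with hs
  set g : (↥Λ × Y₃.T p₃) →ₗ[ℂ] (Y₁.T p₁ × Y₂.T p₂ × Y₃.T p₃) :=
    LinearMap.prod ((LinearMap.fst ℂ _ _).comp s)
      (LinearMap.prod ((LinearMap.snd ℂ _ _).comp s) (LinearMap.snd ℂ _ _)) with hg
  have hgval : ∀ x : ↥Λ × Y₃.T p₃, g x = ((x.1 : Y₁.T p₁ × Y₂.T p₂).1,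
      (x.1 : Y₁.T p₁ × Y₂.T p₂).2, x.2) := fun x => rfl
  have hginj : Function.Injective g := by
    intro x y hxy
    rw [hgval, hgval] at hxy
    rw [Prod.mk.injEq, Prod.mk.injEq] at hxy
    exact Prod.ext (Subtype.ext (Prod.ext hxy.1 hxy.2.1)) hxy.2.2
  have hgrange : LinearMap.range g = Λ.comap (dpi12 Y₁ Y₂ Y₃ p₁ p₂ p₃) := by
    ext x
    constructor
    · rintro ⟨⟨a, w⟩, rfl⟩
      rw [hgval]
      simpa [Submodule.mem_comap, dpi12] using a.2
    · intro hx
      exact ⟨(⟨(x.1, x.2.1), hx⟩, x.2.2), rfl⟩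
  have := LinearMap.finrank_range_of_inj hginj
  rw [hgrange, Module.finrank_prod] at this
  exact this

private lemma finrank_comap_dpi23 (Y₁ Y₂ Y₃ : HoloSymplVariety)
    (p₁ : Y₁.pt) (p₂ : Y₂.pt) (p₃ : Y₃.pt) (Λ : Submodule ℂ (Y₂.T p₂ × Y₃.T p₃)) :
    finrank ℂ (Λ.comap (dpi23 Y₁ Y₂ Y₃ p₁ p₂ p₃)) = finrank ℂ Λ + finrank ℂ (Y₁.T p₁) := by
  set g : (Y₁.T p₁ × ↥Λ) →ₗ[ℂ] (Y₁.T p₁ × Y₂.T p₂ × Y₃.T p₃) :=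
    LinearMap.prod (LinearMap.fst ℂ _ _) (Λ.subtype.comp (LinearMap.snd ℂ _ _)) with hg
  have hgval : ∀ x : Y₁.T p₁ × ↥Λ, g x = (x.1, (x.2 : Y₂.T p₂ × Y₃.T p₃)) := fun x => rfl
  have hginj : Function.Injective g := by
    intro x y hxy
    rw [hgval, hgval] at hxy
    rw [Prod.mk.injEq] at hxy
    exact Prod.ext hxy.1 (Subtype.ext hxy.2)
  have hgrange : LinearMap.range g = Λ.comap (dpi23 Y₁ Y₂ Y₃ p₁ p₂ p₃) := by
    ext x
    constructor
    · rintro ⟨⟨u, a⟩, rfl⟩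
      rw [hgval]
      simpa [Submodule.mem_comap, dpi23] using a.2
    · intro hx
      exact ⟨(x.1, ⟨(x.2.1, x.2.2), hx⟩), rfl⟩
  have := LinearMap.finrank_range_of_inj hginj
  rw [hgrange, Module.finrank_prod] at this
  rw [this, add_comm]

end ComapRank

/-- Suppose `Y₁, Y₂, Y₃` are holomorphic symplectic varieties and
`L₁₂ ⊂ Y₁ × Y₂`, `L₂₃ ⊂ Y₂ × Y₃` are smooth Lagrangian subvarieties.  If the projection
`π₁₃` from the scheme-theoretic intersection `π₁₂⁻¹(L₁₂) ∩ π₂₃⁻¹(L₂₃)` to `Y₁ × Y₃` is an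
isomorphism onto its image (encoded here by injectivity on the underlying points and on
each tangent space of the scheme-theoretic intersection), then the intersection
`π₁₂⁻¹(L₁₂) ∩ π₂₃⁻¹(L₂₃) ⊂ Y₁ × Y₂ × Y₃` is transverse: at each of its points the
tangent space `π₁₂⁻¹(T L₁₂) ∩ π₂₃⁻¹(T L₂₃)` has dimension
`dim(Y₁ × Y₂ × Y₃) − dim L₁₂ − dim L₂₃`. -/
theorem lagrangian_intersection_transverse (Y₁ Y₂ Y₃ : HoloSymplVariety)
    (L₁₂ : SmoothLagrangian Y₁ Y₂) (L₂₃ : SmoothLagrangian Y₂ Y₃)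
    (hpts : Set.InjOn (fun t : Y₁.pt × Y₂.pt × Y₃.pt => (t.1, t.2.2))
      {t | (t.1, t.2.1) ∈ L₁₂.L ∧ (t.2.1, t.2.2) ∈ L₂₃.L})
    (htan : ∀ (p₁ : Y₁.pt) (p₂ : Y₂.pt) (p₃ : Y₃.pt) (h₁₂ : (p₁, p₂) ∈ L₁₂.L)
      (h₂₃ : (p₂, p₃) ∈ L₂₃.L)
      (x : Y₁.T p₁ × Y₂.T p₂ × Y₃.T p₃),
      x ∈ Submodule.comap (dpi12 Y₁ Y₂ Y₃ p₁ p₂ p₃) (L₁₂.tangent (p₁, p₂) h₁₂) ⊓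
          Submodule.comap (dpi23 Y₁ Y₂ Y₃ p₁ p₂ p₃) (L₂₃.tangent (p₂, p₃) h₂₃) →
      dpi13 Y₁ Y₂ Y₃ p₁ p₂ p₃ x = 0 → x = 0) :
    ∀ (p₁ : Y₁.pt) (p₂ : Y₂.pt) (p₃ : Y₃.pt) (h₁₂ : (p₁, p₂) ∈ L₁₂.L)
      (h₂₃ : (p₂, p₃) ∈ L₂₃.L),
      Module.finrank ℂ
        ↥(Submodule.comap (dpi12 Y₁ Y₂ Y₃ p₁ p₂ p₃) (L₁₂.tangent (p₁, p₂) h₁₂) ⊓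
            Submodule.comap (dpi23 Y₁ Y₂ Y₃ p₁ p₂ p₃) (L₂₃.tangent (p₂, p₃) h₂₃))
        + Module.finrank ℂ ↥(L₁₂.tangent (p₁, p₂) h₁₂)
        + Module.finrank ℂ ↥(L₂₃.tangent (p₂, p₃) h₂₃)
        = Module.finrank ℂ (Y₁.T p₁ × Y₂.T p₂ × Y₃.T p₃) := by
  intro p₁ p₂ p₃ h₁₂ h₂₃
  classical
  set Λ12 : Submodule ℂ (Y₁.T p₁ × Y₂.T p₂) := L₁₂.tangent (p₁, p₂) h₁₂ with hΛ12
  set Λ23 : Submodule ℂ (Y₂.T p₂ × Y₃.T p₃) := L₂₃.tangent (p₂, p₃) h₂₃ with hΛ23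
  obtain ⟨hiso12, hdim12₀⟩ := L₁₂.lagrangian (p₁, p₂) h₁₂
  obtain ⟨hiso23, hdim23₀⟩ := L₂₃.lagrangian (p₂, p₃) h₂₃
  have hdim12 : 2 * Module.finrank ℂ Λ12
      = Module.finrank ℂ (Y₁.T p₁) + Module.finrank ℂ (Y₂.T p₂) := by
    rw [← Module.finrank_prod]
    exact hdim12₀
  have hdim23 : 2 * Module.finrank ℂ Λ23
      = Module.finrank ℂ (Y₂.T p₂) + Module.finrank ℂ (Y₃.T p₃) := by
    rw [← Module.finrank_prod]
    exact hdim23₀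
  have horth12 := (lag_orth_common (symplForm Y₁ p₁) (symplForm Y₂ p₂)
    (symplForm_isAlt Y₁ p₁) (symplForm_nondeg Y₁ p₁)
    (symplForm_isAlt Y₂ p₂) (symplForm_nondeg Y₂ p₂) Λ12
    (fun x hx y hy => hiso12 x hx y hy) hdim12).1
  have horth23 := (lag_orth_common (symplForm Y₂ p₂) (symplForm Y₃ p₃)
    (symplForm_isAlt Y₂ p₂) (symplForm_nondeg Y₂ p₂)
    (symplForm_isAlt Y₃ p₃) (symplForm_nondeg Y₃ p₃) Λ23
    (fun x hx y hy => hiso23 x hx y hy) hdim23).2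
  set P := Λ12.map (LinearMap.snd ℂ (Y₁.T p₁) (Y₂.T p₂)) with hP
  set Q := Λ23.map (LinearMap.fst ℂ (Y₂.T p₂) (Y₃.T p₃)) with hQ
  -- the hypothesis on π₁₃ gives that the two "vertical" spaces intersect trivially
  have hAC : Λ12.comap (LinearMap.inr ℂ (Y₁.T p₁) (Y₂.T p₂))
      ⊓ Λ23.comap (LinearMap.inl ℂ (Y₂.T p₂) (Y₃.T p₃)) = ⊥ := by
    rw [eq_bot_iff]
    rintro v ⟨hvA, hvC⟩
    have h0 := htan p₁ p₂ p₃ h₁₂ h₂₃ (0, v, 0)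
      ⟨by simpa [Submodule.mem_comap, dpi12] using hvA,
       by simpa [Submodule.mem_comap, dpi23] using hvC⟩
      (by simp [dpi13])
    have := congrArg (fun t : Y₁.T p₁ × Y₂.T p₂ × Y₃.T p₃ => t.2.1) h0
    simpa using this
  -- hence the two projections to V₂ span everything
  have horthPQ : (symplForm Y₂ p₂).orthogonal (P ⊔ Q) = ⊥ := by
    rw [eq_bot_iff, ← hAC]
    exact le_inf (horth12 ▸ (symplForm Y₂ p₂).orthogonal_le le_sup_left)
      (horth23 ▸ (symplForm Y₂ p₂).orthogonal_le le_sup_right)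
  have hPQ : P ⊔ Q = ⊤ := by
    apply Submodule.eq_top_of_finrank_eq
    have h := LinearMap.BilinForm.finrank_orthogonal (symplForm_nondeg Y₂ p₂)
      (P ⊔ Q)
    rw [horthPQ, finrank_bot] at h
    have := Submodule.finrank_le (P ⊔ Q)
    omega
  -- hence the two comaps span everything
  have hsup : Λ12.comap (dpi12 Y₁ Y₂ Y₃ p₁ p₂ p₃) ⊔ Λ23.comap (dpi23 Y₁ Y₂ Y₃ p₁ p₂ p₃)
      = ⊤ := by
    rw [eq_top_iff]
    rintro ⟨u, v, w⟩ -
    have hv : v ∈ P ⊔ Q := hPQ ▸ Submodule.mem_top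
    obtain ⟨p, hp, q, hq, hpq⟩ := Submodule.mem_sup.mp hv
    obtain ⟨a, haL, ha⟩ := hp
    obtain ⟨b, hbL, hb⟩ := hq
    refine Submodule.mem_sup.mpr ⟨(a.1, p, w - b.2), ?_, (u - a.1, q, b.2), ?_, ?_⟩
    · show (a.1, p) ∈ Λ12
      rw [← ha]
      exact haL
    · show (q, b.2) ∈ Λ23
      rw [← hb]
      exact hbL
    · rw [Prod.mk_add_mk, Prod.mk_add_mk, hpq]
      congr 1 <;> [skip; congr 1] <;> abel
  have hsub := Submodule.finrank_sup_add_finrank_inf_eq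
    (Λ12.comap (dpi12 Y₁ Y₂ Y₃ p₁ p₂ p₃)) (Λ23.comap (dpi23 Y₁ Y₂ Y₃ p₁ p₂ p₃))
  rw [hsup, finrank_top, Module.finrank_prod, Module.finrank_prod] at hsub
  have hc1 := finrank_comap_dpi12 Y₁ Y₂ Y₃ p₁ p₂ p₃ Λ12
  have hc2 := finrank_comap_dpi23 Y₁ Y₂ Y₃ p₁ p₂ p₃ Λ23
  rw [Module.finrank_prod, Module.finrank_prod]
  have hfix1 : Module.finrank ℂ ↥(L₁₂.tangent (p₁, p₂) h₁₂) = Module.finrank ℂ ↥Λ12 := rfl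
  have hfix2 : Module.finrank ℂ ↥(L₂₃.tangent (p₂, p₃) h₂₃) = Module.finrank ℂ ↥Λ23 := rfl
  rw [hfix1, hfix2]
  omega
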